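/- There exists ε₀ > 0 such that for every 0 < ε < ε₀ there exist points p and q on the frontier of Ω_ε with N_{u_ε}(p) > 0 and N_{u_ε}(q) < 0; i.e. the oriented curvature of ∂Ω_ε changes sign, being negative at p and positive at q. -/

import Mathlib

set_option maxHeartbeats 1000000


open Set Filter Topology

/-- The holomorphic function `F(z) = -∏ (z - xᵢ)`. -/
noncomputable def FF (k : ℕ) (x : Fin (2*k) → ℝ) (z : ℂ) : ℂ :=
  -∏ i, (z - (x i : ℂ))

/-- `v(x,y) = Re F(x + iy)`, a harmonic function. -/
noncomputable def vv (k : ℕ) (x : Fin (2*k) → ℝ) (p : ℝ × ℝ) : ℝ :=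
  (FF k x ((p.1 : ℂ) + (p.2 : ℂ) * Complex.I)).re

/-- The restriction `f` of `F` to the real line. -/
noncomputable def ff (k : ℕ) (x : Fin (2*k) → ℝ) (t : ℝ) : ℝ :=
  (FF k x (t : ℂ)).re

/-- `u_ε(x,y) = 1/2 - y²/2 + ε (y³ - 3 x² y) + ε^{3/2} v(x,y)`. -/
noncomputable def uu (k : ℕ) (x : Fin (2*k) → ℝ) (ε : ℝ) (p : ℝ × ℝ) : ℝ :=
  1/2 - p.2^2/2 + ε * (p.2^3 - 3*p.1^2*p.2) + ε ^ ((3:ℝ)/2) * vv k x p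

/-- `x_ε = (3 ε^{-3/2})^{1/(2k)}`. -/
noncomputable def xeps (k : ℕ) (ε : ℝ) : ℝ :=
  (3 * ε ^ (-(3:ℝ)/2)) ^ ((1:ℝ)/(2*k))

/-- `Ω_ε`: the connected component of `{u_ε > 0}` containing `(x₁, 0)`. -/
noncomputable def Omeg (k : ℕ) (hk : 2 ≤ k) (x : Fin (2*k) → ℝ) (ε : ℝ) : Set (ℝ × ℝ) :=
  connectedComponentIn {p : ℝ × ℝ | 0 < uu k x ε p} (x ⟨0, by omega⟩, 0)

/-- partial derivative in the first variable. -/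
noncomputable def px (g : ℝ × ℝ → ℝ) (p : ℝ × ℝ) : ℝ :=
  deriv (fun t => g (t, p.2)) p.1

/-- partial derivative in the second variable. -/
noncomputable def py (g : ℝ × ℝ → ℝ) (p : ℝ × ℝ) : ℝ :=
  deriv (fun t => g (p.1, t)) p.2

/-- `N_u = u_xx u_y² - 2 u_xy u_x u_y + u_yy u_x²`. -/
noncomputable def NN (g : ℝ × ℝ → ℝ) (p : ℝ × ℝ) : ℝ :=
  px (px g) p * (py g p)^2 - 2 * py (px g) p * px g p * py g p + py (py g) p * (px g p)^2

/-- Oriented curvature of a level curve of `g`. -/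
noncomputable def CurvU (g : ℝ × ℝ → ℝ) (p : ℝ × ℝ) : ℝ :=
  -(NN g p) / ((px g p)^2 + (py g p)^2) ^ ((3:ℝ)/2)

/-- auxiliary polynomial -/
noncomputable def PP (k : ℕ) (x : Fin (2*k) → ℝ) : Polynomial ℂ :=
  -∏ i, (Polynomial.X - Polynomial.C (x i : ℂ))

lemma FF_eqP (k : ℕ) (x : Fin (2*k) → ℝ) (z : ℂ) : FF k x z = (PP k x).eval z := by
  simp [FF, PP, Polynomial.eval_prod]

lemma uu_eqP (k : ℕ) (x : Fin (2*k) → ℝ) (ε : ℝ) : uu k x ε = fun p : ℝ × ℝ =>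
    1/2 - p.2^2/2 + ε * (p.2^3 - 3*p.1^2*p.2)
      + ε ^ ((3:ℝ)/2) * ((PP k x).eval ((p.1:ℂ) + (p.2:ℂ) * Complex.I)).re := by
  funext p; simp [uu, vv, FF_eqP]

lemma uu_val (k : ℕ) (x : Fin (2*k) → ℝ) (ε : ℝ) (a b : ℝ) :
    uu k x ε (a, b) = 1/2 - b^2/2 + ε * (b^3 - 3*a^2*b)
      + ε ^ ((3:ℝ)/2) * ((PP k x).eval ((a:ℂ) + (b:ℂ) * Complex.I)).re := by
  rw [uu_eqP]

lemma hasDerivAt_re_poly (Q : Polynomial ℂ) {g : ℝ → ℂ} {w : ℂ} {t : ℝ}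
    (hg : HasDerivAt g w t) :
    HasDerivAt (fun s => (Q.eval (g s)).re) ((Q.derivative.eval (g t) * w).re) t := by
  have h1 : HasDerivAt ((fun z => Q.eval z) ∘ g) (w • Q.derivative.eval (g t)) t :=
    (Q.hasDerivAt (g t)).scomp t hg
  have h2 := (Complex.reCLM.hasFDerivAt (x := Q.eval (g t))).comp_hasDerivAt t h1
  convert h2 using 1 <;> first | rfl | simp [Function.comp, smul_eq_mul, mul_comm]

lemma hasDerivAt_horiz (y t : ℝ) :
    HasDerivAt (fun s : ℝ => (s:ℂ) + (y:ℂ) * Complex.I) 1 t := by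
  simpa using (Complex.ofRealCLM.hasDerivAt (x := t)).add_const ((y:ℂ) * Complex.I)

lemma hasDerivAt_vert (a t : ℝ) :
    HasDerivAt (fun s : ℝ => (a:ℂ) + (s:ℂ) * Complex.I) Complex.I t := by
  have := ((Complex.ofRealCLM.hasDerivAt (x := t)).mul_const Complex.I).const_add (a:ℂ)
  simpa using this

lemma px_uuP (k : ℕ) (x : Fin (2*k) → ℝ) (ε : ℝ) : px (uu k x ε) = fun p : ℝ × ℝ =>
    -(6*ε*p.1*p.2) + ε ^ ((3:ℝ)/2) *
      ((PP k x).derivative.eval ((p.1:ℂ) + (p.2:ℂ) * Complex.I)).re := by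
  funext p
  rw [uu_eqP]
  have hpoly := hasDerivAt_re_poly (PP k x) (hasDerivAt_horiz p.2 p.1)
  have hcub : HasDerivAt (fun t : ℝ => ε * (p.2^3 - 3*t^2*p.2)) (-(6*ε*p.1*p.2)) p.1 := by
    have h2 : HasDerivAt (fun t : ℝ => t^2) (2*p.1) p.1 := by simpa using hasDerivAt_pow 2 p.1
    have h4 := (((h2.const_mul (3:ℝ)).mul_const p.2).const_sub (p.2^3)).const_mul ε
    convert h4 using 1 <;> first | rfl | ring
  have hc : HasDerivAt (fun _ : ℝ => 1/2 - p.2^2/2) 0 p.1 := hasDerivAt_const _ _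
  have H := (hc.add hcub).add (hpoly.const_mul (ε ^ ((3:ℝ)/2)))
  have H' : HasDerivAt (fun t : ℝ => 1/2 - p.2^2/2 + ε * (p.2^3 - 3*t^2*p.2)
      + ε ^ ((3:ℝ)/2) * ((PP k x).eval ((t:ℂ) + (p.2:ℂ) * Complex.I)).re)
      (-(6*ε*p.1*p.2) + ε ^ ((3:ℝ)/2) *
        ((PP k x).derivative.eval ((p.1:ℂ) + (p.2:ℂ) * Complex.I)).re) p.1 := by
    convert H using 1 <;> first | rfl | simp only [mul_one, zero_add]
  exact H'.deriv

lemma py_uuP (k : ℕ) (x : Fin (2*k) → ℝ) (ε : ℝ) : py (uu k x ε) = fun p : ℝ × ℝ =>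
    -p.2 + ε * (3*p.2^2 - 3*p.1^2) + ε ^ ((3:ℝ)/2) *
      ((PP k x).derivative.eval ((p.1:ℂ) + (p.2:ℂ) * Complex.I) * Complex.I).re := by
  funext p
  rw [uu_eqP]
  have hpoly := hasDerivAt_re_poly (PP k x) (hasDerivAt_vert p.1 p.2)
  have hsq : HasDerivAt (fun t : ℝ => 1/2 - t^2/2) (-p.2) p.2 := by
    have h2 : HasDerivAt (fun t : ℝ => t^2) (2*p.2) p.2 := by simpa using hasDerivAt_pow 2 p.2
    have := (h2.div_const 2).const_sub (1/2)
    convert this using 1 <;> first | rfl | ring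
  have hcub : HasDerivAt (fun t : ℝ => ε * (t^3 - 3*p.1^2*t)) (ε * (3*p.2^2 - 3*p.1^2)) p.2 := by
    have h3 : HasDerivAt (fun t : ℝ => t^3) (3*p.2^2) p.2 := by simpa using hasDerivAt_pow 3 p.2
    have hlin : HasDerivAt (fun t : ℝ => 3*p.1^2*t) (3*p.1^2) p.2 := by
      simpa using (hasDerivAt_id p.2).const_mul (3*p.1^2)
    have := (h3.sub hlin).const_mul ε
    convert this using 1 <;> first | rfl | ring
  have H := (hsq.add hcub).add (hpoly.const_mul (ε ^ ((3:ℝ)/2)))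
  have H' : HasDerivAt (fun t : ℝ => 1/2 - t^2/2 + ε * (t^3 - 3*p.1^2*t)
      + ε ^ ((3:ℝ)/2) * ((PP k x).eval ((p.1:ℂ) + (t:ℂ) * Complex.I)).re)
      (-p.2 + ε * (3*p.2^2 - 3*p.1^2) + ε ^ ((3:ℝ)/2) *
        ((PP k x).derivative.eval ((p.1:ℂ) + (p.2:ℂ) * Complex.I) * Complex.I).re) p.2 := by
    convert H using 1 <;> first | rfl | ring
  exact H'.deriv

lemma px_uu_pt (k : ℕ) (x : Fin (2*k) → ℝ) (ε : ℝ) (p : ℝ × ℝ) :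
    px (uu k x ε) p = -(6*ε*p.1*p.2) + ε ^ ((3:ℝ)/2) *
      ((PP k x).derivative.eval ((p.1:ℂ) + (p.2:ℂ) * Complex.I)).re := by
  rw [px_uuP]

lemma py_uu_pt (k : ℕ) (x : Fin (2*k) → ℝ) (ε : ℝ) (p : ℝ × ℝ) :
    py (uu k x ε) p = -p.2 + ε * (3*p.2^2 - 3*p.1^2) + ε ^ ((3:ℝ)/2) *
      ((PP k x).derivative.eval ((p.1:ℂ) + (p.2:ℂ) * Complex.I) * Complex.I).re := by
  rw [py_uuP]

lemma px_px_uuP (k : ℕ) (x : Fin (2*k) → ℝ) (ε : ℝ) (p : ℝ × ℝ) :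
    px (px (uu k x ε)) p = -(6*ε*p.2) + ε ^ ((3:ℝ)/2) *
      ((PP k x).derivative.derivative.eval ((p.1:ℂ) + (p.2:ℂ) * Complex.I)).re := by
  rw [px_uuP]
  have hpoly := hasDerivAt_re_poly (PP k x).derivative (hasDerivAt_horiz p.2 p.1)
  have hlin : HasDerivAt (fun t : ℝ => -(6*ε*t*p.2)) (-(6*ε*p.2)) p.1 := by
    have := (((hasDerivAt_id p.1).const_mul (6*ε)).mul_const p.2).neg
    convert this using 1 <;> first | rfl | ring
  have H := hlin.add (hpoly.const_mul (ε ^ ((3:ℝ)/2)))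
  have H' : HasDerivAt (fun t : ℝ => -(6*ε*t*p.2) + ε ^ ((3:ℝ)/2) *
      ((PP k x).derivative.eval ((t:ℂ) + (p.2:ℂ) * Complex.I)).re)
      (-(6*ε*p.2) + ε ^ ((3:ℝ)/2) *
        ((PP k x).derivative.derivative.eval ((p.1:ℂ) + (p.2:ℂ) * Complex.I)).re) p.1 := by
    convert H using 1 <;> first | rfl | simp only [mul_one]
  exact H'.deriv

lemma py_px_uuP (k : ℕ) (x : Fin (2*k) → ℝ) (ε : ℝ) (p : ℝ × ℝ) :
    py (px (uu k x ε)) p = -(6*ε*p.1) + ε ^ ((3:ℝ)/2) *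
      ((PP k x).derivative.derivative.eval ((p.1:ℂ) + (p.2:ℂ) * Complex.I) * Complex.I).re := by
  rw [px_uuP]
  have hpoly := hasDerivAt_re_poly (PP k x).derivative (hasDerivAt_vert p.1 p.2)
  have hlin : HasDerivAt (fun t : ℝ => -(6*ε*p.1*t)) (-(6*ε*p.1)) p.2 := by
    have := ((hasDerivAt_id p.2).const_mul (6*ε*p.1)).neg
    convert this using 1 <;> first | rfl | ring
  have H := hlin.add (hpoly.const_mul (ε ^ ((3:ℝ)/2)))
  have H' : HasDerivAt (fun t : ℝ => -(6*ε*p.1*t) + ε ^ ((3:ℝ)/2) *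
      ((PP k x).derivative.eval ((p.1:ℂ) + (t:ℂ) * Complex.I)).re)
      (-(6*ε*p.1) + ε ^ ((3:ℝ)/2) *
        ((PP k x).derivative.derivative.eval ((p.1:ℂ) + (p.2:ℂ) * Complex.I) * Complex.I).re) p.2 := by
    convert H using 1 <;> first | rfl | ring
  exact H'.deriv

lemma py_py_uuP (k : ℕ) (x : Fin (2*k) → ℝ) (ε : ℝ) (p : ℝ × ℝ) :
    py (py (uu k x ε)) p = -1 + 6*ε*p.2 - ε ^ ((3:ℝ)/2) *
      ((PP k x).derivative.derivative.eval ((p.1:ℂ) + (p.2:ℂ) * Complex.I)).re := by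
  rw [py_uuP]
  have hQ : ∀ w : ℂ, (PP k x).derivative.eval w * Complex.I
      = ((PP k x).derivative * Polynomial.C Complex.I).eval w := by
    intro w; simp
  simp only [hQ]
  have hpoly := hasDerivAt_re_poly ((PP k x).derivative * Polynomial.C Complex.I)
    (hasDerivAt_vert p.1 p.2)
  have hlin : HasDerivAt (fun t : ℝ => -t + ε * (3*t^2 - 3*p.1^2)) (-1 + 6*ε*p.2) p.2 := by
    have h2 : HasDerivAt (fun t : ℝ => t^2) (2*p.2) p.2 := by simpa using hasDerivAt_pow 2 p.2
    have := (hasDerivAt_id p.2).neg.add (((h2.const_mul 3).sub_const (3*p.1^2)).const_mul ε)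
    convert this using 1 <;> first | rfl | ring
  have H := hlin.add (hpoly.const_mul (ε ^ ((3:ℝ)/2)))
  have H' : HasDerivAt (fun t : ℝ => -t + ε * (3*t^2 - 3*p.1^2) + ε ^ ((3:ℝ)/2) *
      (((PP k x).derivative * Polynomial.C Complex.I).eval ((p.1:ℂ) + (t:ℂ) * Complex.I)).re)
      (-1 + 6*ε*p.2 - ε ^ ((3:ℝ)/2) *
        ((PP k x).derivative.derivative.eval ((p.1:ℂ) + (p.2:ℂ) * Complex.I)).re) p.2 := by
    convert H using 1
    · rfl
    · rfl
    · rfl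
    have : (((PP k x).derivative * Polynomial.C Complex.I).derivative.eval
        ((p.1:ℂ) + (p.2:ℂ) * Complex.I) * Complex.I).re
        = -((PP k x).derivative.derivative.eval ((p.1:ℂ) + (p.2:ℂ) * Complex.I)).re := by
      simp [Polynomial.derivative_mul, mul_assoc, Complex.I_mul_I]
    rw [this]; ring
  exact H'.deriv

lemma NN_at (k : ℕ) (x : Fin (2*k) → ℝ) (ε y : ℝ) :
    NN (uu k x ε) ((0:ℝ), y) =
      (-(6*ε*y) + ε ^ ((3:ℝ)/2) *
          ((PP k x).derivative.derivative.eval (((0:ℝ):ℂ) + (y:ℂ) * Complex.I)).re)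
        * (-y + 3*ε*y^2 + ε ^ ((3:ℝ)/2) *
          ((PP k x).derivative.eval (((0:ℝ):ℂ) + (y:ℂ) * Complex.I) * Complex.I).re)^2
      - 2 * (ε ^ ((3:ℝ)/2) *
          ((PP k x).derivative.derivative.eval (((0:ℝ):ℂ) + (y:ℂ) * Complex.I) * Complex.I).re)
        * (ε ^ ((3:ℝ)/2) *
          ((PP k x).derivative.eval (((0:ℝ):ℂ) + (y:ℂ) * Complex.I)).re)
        * (-y + 3*ε*y^2 + ε ^ ((3:ℝ)/2) *
          ((PP k x).derivative.eval (((0:ℝ):ℂ) + (y:ℂ) * Complex.I) * Complex.I).re)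
      + (-1 + 6*ε*y - ε ^ ((3:ℝ)/2) *
          ((PP k x).derivative.derivative.eval (((0:ℝ):ℂ) + (y:ℂ) * Complex.I)).re)
        * (ε ^ ((3:ℝ)/2) *
          ((PP k x).derivative.eval (((0:ℝ):ℂ) + (y:ℂ) * Complex.I)).re)^2 := by
  simp only [NN, px_uu_pt, py_uu_pt, px_px_uuP, py_px_uuP, py_py_uuP]
  ring

lemma subset_compIn {X : Type*} [TopologicalSpace X] {U s : Set X} {a c : X}
    (hs : IsPreconnected s) (hsU : s ⊆ U) (hc : c ∈ s)
    (hcC : c ∈ connectedComponentIn U a) (ha : a ∈ U) :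
    s ⊆ connectedComponentIn U a := by
  have hun : IsPreconnected (s ∪ connectedComponentIn U a) :=
    IsPreconnected.union c hc hcC hs isPreconnected_connectedComponentIn
  have hsub : s ∪ connectedComponentIn U a ⊆ U :=
    Set.union_subset hsU (connectedComponentIn_subset _ _)
  have := hun.subset_connectedComponentIn
    (Set.mem_union_right _ (mem_connectedComponentIn ha)) hsub
  exact Set.subset_union_left.trans this

lemma re_bound {C : ℝ} {w : ℂ} (h : ‖w‖ ≤ C) : |w.re| ≤ C :=
  (Complex.abs_re_le_norm w).trans h

lemma re_bound_I {C : ℝ} {w : ℂ} (h : ‖w‖ ≤ C) : |(w * Complex.I).re| ≤ C := by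
  refine (Complex.abs_re_le_norm _).trans ?_
  rw [norm_mul, Complex.norm_I, mul_one]
  exact h

lemma NN_core_neg (ε C y e v0 r1 i1 r2 i2 : ℝ)
    (hC : 1 ≤ C) (hε : 0 < ε) (hε' : ε ≤ 1/2000) (he0 : 0 ≤ e) (heC : e*C ≤ ε/2)
    (hv0 : |v0| ≤ C) (hr1 : |r1| ≤ C) (hi1 : |i1| ≤ C) (hr2 : |r2| ≤ C) (hi2 : |i2| ≤ C)
    (hy0 : 0 ≤ y) (hy2 : y ≤ 2)
    (hu : 1/2 - y^2/2 + ε*y^3 + e*v0 = 0) :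
    (-(6*ε*y) + e*r2) * (-y + 3*ε*y^2 + e*i1)^2
      - 2*(e*i2)*(e*r1)*(-y + 3*ε*y^2 + e*i1)
      + (-1 + 6*ε*y - e*r2)*(e*r1)^2 < 0 := by
  have key : ∀ a : ℝ, |a| ≤ C → |e * a| ≤ ε/2 := by
    intro a ha
    rw [abs_mul, abs_of_nonneg he0]
    exact le_trans (mul_le_mul_of_nonneg_left ha he0) heC
  have hbv0 := abs_le.mp (key _ hv0)
  have hbr1 := abs_le.mp (key _ hr1)
  have hbi1 := abs_le.mp (key _ hi1)
  have hbr2 := abs_le.mp (key _ hr2)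
  have hbi2 := abs_le.mp (key _ hi2)
  have hy_lo : 3/4 ≤ y := by
    nlinarith [hbv0.1, hbv0.2, mul_nonneg hε.le (pow_nonneg hy0 3)]
  have hcube : y^3 ≤ 8 := by nlinarith [sq_nonneg y, mul_nonneg hy0 hy0]
  have hy_hi : y ≤ 5/4 := by
    nlinarith [hbv0.1, hbv0.2, hcube, mul_nonneg hε.le (pow_nonneg hy0 3), sq_nonneg (y - 5/4)]
  have hysq_hi : y^2 ≤ 2 := by nlinarith
  generalize hb : -y + 3*ε*y^2 + e*i1 = b
  have hb_hi : b ≤ -1/2 := by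
    linarith [hb, hbi1.2, mul_le_mul_of_nonneg_left hysq_hi (by positivity : (0:ℝ) ≤ 3*ε), hy_lo]
  have hb_lo : -3/2 ≤ b := by
    linarith [hb, hbi1.1, mul_nonneg hε.le (sq_nonneg y), hy_hi]
  have hb2 : 1/4 ≤ b^2 := by nlinarith [hb_hi, hb_lo]
  have hA : -(6*ε*y) + e*r2 ≤ -4*ε := by
    linarith [hbr2.2, mul_le_mul_of_nonneg_left hy_lo (by positivity : (0:ℝ) ≤ 6*ε), hε']
  have ht1 : (-(6*ε*y) + e*r2) * b^2 ≤ -ε := by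
    have h := mul_le_mul_of_nonpos_left hb2 (by linarith : -(6*ε*y) + e*r2 ≤ 0)
    linarith
  have hba : |b| ≤ 3/2 := abs_le.mpr ⟨by linarith, by linarith⟩
  have h12 : |(e*i2)*((e*r1)*b)| ≤ (ε/2)*((ε/2)*(3/2)) := by
    rw [abs_mul (e*i2) ((e*r1)*b), abs_mul (e*r1) b]
    have step1 : |e*r1| * |b| ≤ (ε/2)*(3/2) :=
      mul_le_mul (key _ hr1) hba (abs_nonneg _) (by linarith [hε.le])
    exact mul_le_mul (key _ hi2) step1 (by positivity) (by linarith [hε.le])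
  have hM : |2*(e*i2)*(e*r1)*b| ≤ 3/4*ε^2 := by
    have heq : 2*(e*i2)*(e*r1)*b = 2*((e*i2)*((e*r1)*b)) := by ring
    rw [heq, abs_mul, abs_two]
    nlinarith [h12]
  have hMb := abs_le.mp hM
  have hc_le : -1 + 6*ε*y - e*r2 ≤ 0 := by
    linarith [hbr2.1, mul_le_mul_of_nonneg_left hy2 (by positivity : (0:ℝ) ≤ 6*ε), hε']
  have ht3 : (-1 + 6*ε*y - e*r2)*(e*r1)^2 ≤ 0 := by
    have := mul_le_mul_of_nonneg_right hc_le (sq_nonneg (e*r1))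
    simpa using this
  nlinarith [ht1, hMb.1, ht3, mul_le_mul_of_nonneg_left hε' hε.le]

lemma NN_core_pos (ε C y e v0 r1 i1 r2 i2 : ℝ)
    (hC : 1 ≤ C) (hε : 0 < ε) (hε' : ε ≤ 1/2000) (he0 : 0 ≤ e) (heC : e*C ≤ ε/2)
    (hv0 : |v0| ≤ C) (hr1 : |r1| ≤ C) (hi1 : |i1| ≤ C) (hr2 : |r2| ≤ C) (hi2 : |i2| ≤ C)
    (hy0 : -2 ≤ y) (hy2 : y ≤ 0)
    (hu : 1/2 - y^2/2 + ε*y^3 + e*v0 = 0) :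
    0 < (-(6*ε*y) + e*r2) * (-y + 3*ε*y^2 + e*i1)^2
      - 2*(e*i2)*(e*r1)*(-y + 3*ε*y^2 + e*i1)
      + (-1 + 6*ε*y - e*r2)*(e*r1)^2 := by
  have key : ∀ a : ℝ, |a| ≤ C → |e * a| ≤ ε/2 := by
    intro a ha
    rw [abs_mul, abs_of_nonneg he0]
    exact le_trans (mul_le_mul_of_nonneg_left ha he0) heC
  have hbv0 := abs_le.mp (key _ hv0)
  have hbr1 := abs_le.mp (key _ hr1)
  have hbi1 := abs_le.mp (key _ hi1)
  have hbr2 := abs_le.mp (key _ hr2)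
  have hbi2 := abs_le.mp (key _ hi2)
  have hcube_lo : -8 ≤ y^3 := by
    nlinarith [sq_nonneg y, mul_nonneg (neg_nonneg.mpr hy2) (neg_nonneg.mpr hy2)]
  have hcube_hi : y^3 ≤ 0 := by nlinarith [sq_nonneg y]
  have hy_hi : y ≤ -3/4 := by
    nlinarith [hbv0.1, hbv0.2, mul_le_mul_of_nonneg_left hcube_lo hε.le]
  have hy_lo : -5/4 ≤ y := by
    nlinarith [hbv0.1, hbv0.2, mul_le_mul_of_nonneg_left hcube_hi hε.le, sq_nonneg (y + 5/4)]
  have hysq_hi : y^2 ≤ 2 := by nlinarith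
  generalize hb : -y + 3*ε*y^2 + e*i1 = b
  have hb_lo : 1/2 ≤ b := by
    linarith [hb, hbi1.1, mul_nonneg hε.le (sq_nonneg y), hy_hi]
  have hb_hi : b ≤ 3/2 := by
    linarith [hb, hbi1.2, mul_le_mul_of_nonneg_left hysq_hi (by positivity : (0:ℝ) ≤ 3*ε), hy_lo]
  have hb2 : 1/4 ≤ b^2 := by nlinarith [hb_lo, hb_hi]
  have hA : 4*ε ≤ -(6*ε*y) + e*r2 := by
    linarith [hbr2.1, mul_le_mul_of_nonneg_left hy_hi (by positivity : (0:ℝ) ≤ 6*ε), hε']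
  have ht1 : ε ≤ (-(6*ε*y) + e*r2) * b^2 := by
    have h := mul_le_mul hA hb2 (by norm_num) (by linarith)
    linarith
  have hba : |b| ≤ 3/2 := abs_le.mpr ⟨by linarith, by linarith⟩
  have h12 : |(e*i2)*((e*r1)*b)| ≤ (ε/2)*((ε/2)*(3/2)) := by
    rw [abs_mul (e*i2) ((e*r1)*b), abs_mul (e*r1) b]
    have step1 : |e*r1| * |b| ≤ (ε/2)*(3/2) :=
      mul_le_mul (key _ hr1) hba (abs_nonneg _) (by linarith [hε.le])
    exact mul_le_mul (key _ hi2) step1 (by positivity) (by linarith [hε.le])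
  have hM : |2*(e*i2)*(e*r1)*b| ≤ 3/4*ε^2 := by
    have heq : 2*(e*i2)*(e*r1)*b = 2*((e*i2)*((e*r1)*b)) := by ring
    rw [heq, abs_mul, abs_two]
    nlinarith [h12]
  have hMb := abs_le.mp hM
  have hc_lo : -2 ≤ -1 + 6*ε*y - e*r2 := by
    linarith [hbr2.2, mul_le_mul_of_nonneg_left hy_lo (by positivity : (0:ℝ) ≤ 6*ε), hε']
  have hsq : (e*r1)^2 ≤ ε^2/4 := by
    have h := sq_le_sq' hbr1.1 hbr1.2
    nlinarith [h]
  have ht3 : -(ε^2/2) ≤ (-1 + 6*ε*y - e*r2)*(e*r1)^2 := by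
    have h1' := mul_le_mul_of_nonneg_right hc_lo (sq_nonneg (e*r1))
    nlinarith [hsq, sq_nonneg (e*r1)]
  nlinarith [ht1, hMb.2, ht3, mul_le_mul_of_nonneg_left hε' hε.le]

lemma NN_neg_at (k : ℕ) (x : Fin (2*k) → ℝ) (ε C y : ℝ)
    (hC : 1 ≤ C) (hε : 0 < ε) (hε' : ε ≤ 1/2000)
    (heC : ε ^ ((3:ℝ)/2) * C ≤ ε/2)
    (h0 : ‖(PP k x).eval (((0:ℝ):ℂ) + (y:ℂ) * Complex.I)‖ ≤ C)
    (h1 : ‖(PP k x).derivative.eval (((0:ℝ):ℂ) + (y:ℂ) * Complex.I)‖ ≤ C)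
    (h2 : ‖(PP k x).derivative.derivative.eval (((0:ℝ):ℂ) + (y:ℂ) * Complex.I)‖ ≤ C)
    (hy0 : 0 ≤ y) (hy2 : y ≤ 2)
    (hu : uu k x ε ((0:ℝ), y) = 0) :
    NN (uu k x ε) ((0:ℝ), y) < 0 := by
  have hu' : 1/2 - y^2/2 + ε*y^3
      + ε ^ ((3:ℝ)/2) * ((PP k x).eval (((0:ℝ):ℂ) + (y:ℂ) * Complex.I)).re = 0 := by
    rw [uu_val] at hu; linear_combination hu
  rw [NN_at]
  exact NN_core_neg ε C y _ _ _ _ _ _ hC hε hε' (Real.rpow_nonneg hε.le _) heC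
    (re_bound h0) (re_bound h1) (re_bound_I h1) (re_bound h2) (re_bound_I h2) hy0 hy2 hu'

lemma NN_pos_at (k : ℕ) (x : Fin (2*k) → ℝ) (ε C y : ℝ)
    (hC : 1 ≤ C) (hε : 0 < ε) (hε' : ε ≤ 1/2000)
    (heC : ε ^ ((3:ℝ)/2) * C ≤ ε/2)
    (h0 : ‖(PP k x).eval (((0:ℝ):ℂ) + (y:ℂ) * Complex.I)‖ ≤ C)
    (h1 : ‖(PP k x).derivative.eval (((0:ℝ):ℂ) + (y:ℂ) * Complex.I)‖ ≤ C)
    (h2 : ‖(PP k x).derivative.derivative.eval (((0:ℝ):ℂ) + (y:ℂ) * Complex.I)‖ ≤ C)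
    (hy0 : -2 ≤ y) (hy2 : y ≤ 0)
    (hu : uu k x ε ((0:ℝ), y) = 0) :
    0 < NN (uu k x ε) ((0:ℝ), y) := by
  have hu' : 1/2 - y^2/2 + ε*y^3
      + ε ^ ((3:ℝ)/2) * ((PP k x).eval (((0:ℝ):ℂ) + (y:ℂ) * Complex.I)).re = 0 := by
    rw [uu_val] at hu; linear_combination hu
  rw [NN_at]
  exact NN_core_pos ε C y _ _ _ _ _ _ hC hε hε' (Real.rpow_nonneg hε.le _) heC
    (re_bound h0) (re_bound h1) (re_bound_I h1) (re_bound h2) (re_bound_I h2) hy0 hy2 hu'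

lemma uu_continuous (k : ℕ) (x : Fin (2*k) → ℝ) (ε : ℝ) : Continuous (uu k x ε) := by
  rw [uu_eqP]
  have hz : Continuous (fun p : ℝ × ℝ => (p.1:ℂ) + (p.2:ℂ) * Complex.I) :=
    (Complex.continuous_ofReal.comp continuous_fst).add
      ((Complex.continuous_ofReal.comp continuous_snd).mul continuous_const)
  exact ((continuous_const.sub ((continuous_snd.pow 2).div_const 2)).add
    (continuous_const.mul ((continuous_snd.pow 3).sub
      ((continuous_const.mul (continuous_fst.pow 2)).mul continuous_snd)))).add
    (continuous_const.mul (Complex.continuous_re.comp ((PP k x).continuous.comp hz)))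

theorem stmt16 (k : ℕ) (hk : 2 ≤ k) (x : Fin (2*k) → ℝ) (hx : StrictMono x)
    (h : ℝ) (hh : h ∈ Set.Ioo (0:ℝ) 1) :
    ∃ ε₀ > (0:ℝ), ∀ ε : ℝ, 0 < ε → ε < ε₀ →
      ∃ p ∈ frontier (Omeg k hk x ε), ∃ q ∈ frontier (Omeg k hk x ε),
        0 < NN (uu k x ε) p ∧ NN (uu k x ε) q < 0 := by
  classical
  set x1 : ℝ := x ⟨0, by omega⟩ with hx1
  obtain ⟨C₀, hC₀⟩ := (isCompact_closedBall (0:ℂ) (|x1| + 2)).exists_bound_of_continuousOn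
    (Continuous.continuousOn ((PP k x).continuous.prodMk
      (((PP k x).derivative.continuous).prodMk ((PP k x).derivative.derivative.continuous))))
  set C := max C₀ 1 with hC
  have hC1 : (1:ℝ) ≤ C := le_max_right _ _
  have hCpos : (0:ℝ) < C := by linarith
  have hbnd : ∀ z : ℂ, ‖z‖ ≤ |x1| + 2 →
      ‖(PP k x).eval z‖ ≤ C ∧ ‖(PP k x).derivative.eval z‖ ≤ C ∧
        ‖(PP k x).derivative.derivative.eval z‖ ≤ C := by
    intro z hz
    have hmem : z ∈ Metric.closedBall (0:ℂ) (|x1| + 2) := by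
      simpa [Metric.mem_closedBall, dist_zero_right] using hz
    have hb := hC₀ z hmem
    have h23 : ‖((PP k x).derivative.eval z, (PP k x).derivative.derivative.eval z)‖ ≤ C₀ :=
      le_trans (norm_snd_le ((PP k x).eval z,
        ((PP k x).derivative.eval z, (PP k x).derivative.derivative.eval z))) hb
    refine ⟨le_trans (le_trans (norm_fst_le ((PP k x).eval z,
        ((PP k x).derivative.eval z, (PP k x).derivative.derivative.eval z))) hb) (le_max_left _ _),
      le_trans (le_trans (norm_fst_le ((PP k x).derivative.eval z,
        (PP k x).derivative.derivative.eval z)) h23) (le_max_left _ _),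
      le_trans (le_trans (norm_snd_le ((PP k x).derivative.eval z,
        (PP k x).derivative.derivative.eval z)) h23) (le_max_left _ _)⟩
  refine ⟨1/(2000*C^2), by positivity, ?_⟩
  intro ε hε hεlt
  have hεC : ε ≤ 1/(2000*C^2) := le_of_lt hεlt
  have hε2000 : ε ≤ 1/2000 := by
    have h1 : 1/(2000*C^2) ≤ 1/2000 := by
      apply one_div_le_one_div_of_le (by norm_num)
      nlinarith
    linarith
  have he0 : (0:ℝ) ≤ ε ^ ((3:ℝ)/2) := Real.rpow_nonneg hε.le _
  have he_eq : ε ^ ((3:ℝ)/2) = ε * Real.sqrt ε := by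
    rw [show ((3:ℝ)/2) = 1 + 1/2 by norm_num, Real.rpow_add hε, Real.rpow_one,
      ← Real.sqrt_eq_rpow]
  have hsqrt : Real.sqrt ε ≤ 1/(2*C) := by
    have h1 : ε ≤ (1/(2*C))^2 := by
      have h2 : (1/(2*C))^2 = 1/(4*C^2) := by field_simp; ring
      have h3 : 1/(2000*C^2) ≤ 1/(4*C^2) := by
        apply one_div_le_one_div_of_le (by positivity)
        nlinarith
      rw [h2]; linarith
    calc Real.sqrt ε ≤ Real.sqrt ((1/(2*C))^2) := Real.sqrt_le_sqrt h1
      _ = 1/(2*C) := Real.sqrt_sq (by positivity)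
  have heC : ε ^ ((3:ℝ)/2) * C ≤ ε/2 := by
    rw [he_eq]
    calc ε * Real.sqrt ε * C ≤ ε * (1/(2*C)) * C :=
          mul_le_mul_of_nonneg_right (mul_le_mul_of_nonneg_left hsqrt hε.le) hCpos.le
      _ = ε/2 := by field_simp
  set U := {p : ℝ × ℝ | 0 < uu k x ε p} with hU
  have hcontu := uu_continuous k x ε
  have hUo : IsOpen U := isOpen_lt continuous_const hcontu
  have hOm : Omeg k hk x ε = connectedComponentIn U (x1, 0) := rfl
  -- the key smallness estimate
  have hkey : ∀ w : ℂ, ‖w‖ ≤ |x1| + 2 →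
      |ε ^ ((3:ℝ)/2) * ((PP k x).eval w).re| ≤ ε/2 := by
    intro w hw
    have hr := re_bound (hbnd w hw).1
    rw [abs_mul, abs_of_nonneg he0]
    exact le_trans (mul_le_mul_of_nonneg_left hr he0) heC
  have hznorm : ∀ y : ℝ, |y| ≤ 2 → ‖((0:ℝ):ℂ) + (y:ℂ) * Complex.I‖ ≤ |x1| + 2 := by
    intro y hy
    have : ‖((0:ℝ):ℂ) + (y:ℂ) * Complex.I‖ = |y| := by
      simp
    rw [this]
    linarith [abs_nonneg x1]
  -- basepoint
  have hroot : (PP k x).eval ((x1:ℂ)) = 0 := by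
    have hzero : ((x1:ℂ) - (x ⟨0, by omega⟩ : ℂ)) = 0 := by rw [hx1]; exact sub_self _
    have hprod : (∏ i : Fin (2*k), ((x1:ℂ) - (x i:ℂ))) = 0 :=
      Finset.prod_eq_zero (Finset.mem_univ _) hzero
    simp [PP, Polynomial.eval_prod, hprod]
  have hx1U : (x1, 0) ∈ U := by
    have huval : uu k x ε (x1, 0) = 1/2 := by
      rw [uu_val]
      simp [hroot]
    show 0 < uu k x ε (x1, 0)
    rw [huval]; norm_num
  -- horizontal segment, (0,0) ∈ Ω
  have hS0U : Set.Icc (min x1 0) (max x1 0) ×ˢ ({0}:Set ℝ) ⊆ U := by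
    rintro ⟨t, s⟩ ⟨ht, hs⟩
    have hs0 : s = 0 := hs
    subst hs0
    show 0 < uu k x ε (t, 0)
    rw [uu_val]
    have habs_t : |t| ≤ |x1| := by
      rw [abs_le]
      constructor
      · calc -|x1| ≤ min x1 0 := le_min (neg_abs_le x1) (by simp)
          _ ≤ t := ht.1
      · calc t ≤ max x1 0 := ht.2
          _ ≤ |x1| := max_le (le_abs_self x1) (abs_nonneg x1)
    have hzn : ‖((t:ℂ) + ((0:ℝ):ℂ) * Complex.I)‖ ≤ |x1| + 2 := by
      have : ‖((t:ℂ) + ((0:ℝ):ℂ) * Complex.I)‖ = |t| := by simp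
      rw [this]; linarith
    have hsm := abs_le.mp (hkey _ hzn)
    nlinarith [hsm.1, hsm.2]
  have h00Ω : ((0:ℝ), (0:ℝ)) ∈ Omeg k hk x ε := by
    rw [hOm]
    have hmem1 : (x1, (0:ℝ)) ∈ Set.Icc (min x1 0) (max x1 0) ×ˢ ({0}:Set ℝ) :=
      ⟨⟨min_le_left _ _, le_max_left _ _⟩, rfl⟩
    have hmem2 : ((0:ℝ), (0:ℝ)) ∈ Set.Icc (min x1 0) (max x1 0) ×ˢ ({0}:Set ℝ) :=
      ⟨⟨min_le_right _ _, le_max_right _ _⟩, rfl⟩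
    exact ((convex_Icc _ _).prod (convex_singleton _)).isPreconnected.subset_connectedComponentIn
      hmem1 hS0U hmem2
  have hΩo : IsOpen (Omeg k hk x ε) := by rw [hOm]; exact hUo.connectedComponentIn
  -- values on the vertical axis
  have h00 : 0 < uu k x ε ((0:ℝ), (0:ℝ)) := by
    rw [uu_val]
    have hsm := abs_le.mp (hkey _ (hznorm 0 (by norm_num)))
    nlinarith [hsm.1, hsm.2]
  have h02 : uu k x ε ((0:ℝ), (2:ℝ)) < 0 := by
    rw [uu_val]
    have hsm := abs_le.mp (hkey _ (hznorm 2 (by norm_num)))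
    nlinarith [hsm.1, hsm.2]
  have h0m2 : uu k x ε ((0:ℝ), (-2:ℝ)) < 0 := by
    rw [uu_val]
    have hsm := abs_le.mp (hkey _ (hznorm (-2) (by norm_num)))
    nlinarith [hsm.1, hsm.2]
  -- upper frontier point
  have hvertcont : Continuous (fun t : ℝ => uu k x ε ((0:ℝ), t)) :=
    hcontu.comp (Continuous.prodMk_right (0:ℝ))
  set S : Set ℝ := {t : ℝ | t ∈ Set.Icc (0:ℝ) 2 ∧ uu k x ε ((0:ℝ), t) ≤ 0} with hSdef
  have hScl : IsClosed S := by
    have hEq : S = Set.Icc (0:ℝ) 2 ∩ (fun t => uu k x ε ((0:ℝ), t)) ⁻¹' Set.Iic 0 :=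
      Set.ext fun t => Iff.rfl
    rw [hEq]
    exact isClosed_Icc.inter (IsClosed.preimage hvertcont isClosed_Iic)
  have h2S : (2:ℝ) ∈ S := ⟨⟨by norm_num, le_refl _⟩, h02.le⟩
  have hbddS : BddBelow S := ⟨0, fun t ht => ht.1.1⟩
  set y1 := sInf S with hy1def
  have hy1S : y1 ∈ S := hScl.csInf_mem ⟨2, h2S⟩ hbddS
  have hy1_0 : 0 < y1 := by
    rcases eq_or_lt_of_le hy1S.1.1 with hcase|hcase
    · exfalso
      have h2' := hy1S.2
      rw [← hcase] at h2'
      linarith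
    · exact hcase
  have hbelow : ∀ t : ℝ, 0 ≤ t → t < y1 → 0 < uu k x ε ((0:ℝ), t) := by
    intro t ht hlt
    by_contra hcon
    push_neg at hcon
    have htS : t ∈ S := ⟨⟨ht, le_trans hlt.le hy1S.1.2⟩, hcon⟩
    exact absurd (csInf_le hbddS htS) (not_le.mpr hlt)
  have hseg1 : ({(0:ℝ)} : Set ℝ) ×ˢ Set.Ico (0:ℝ) y1 ⊆ Omeg k hk x ε := by
    rw [hOm]
    refine subset_compIn (((convex_singleton _).prod (convex_Ico _ _)).isPreconnected)
      ?_ (c := ((0:ℝ),(0:ℝ))) ⟨rfl, le_refl 0, hy1_0⟩ (hOm ▸ h00Ω) hx1U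
    rintro ⟨a, b⟩ ⟨ha, hb⟩
    have ha' : a = 0 := ha
    subst ha'
    exact hbelow b hb.1 hb.2
  have hfr1 : ((0:ℝ), y1) ∈ frontier (Omeg k hk x ε) := by
    rw [hΩo.frontier_eq]
    constructor
    · refine closure_mono hseg1 ?_
      rw [closure_prod_eq]
      exact ⟨subset_closure rfl, by rw [closure_Ico hy1_0.ne]; exact ⟨hy1_0.le, le_refl _⟩⟩
    · intro hmem
      have h1 : 0 < uu k x ε ((0:ℝ), y1) := by
        rw [hOm] at hmem
        have h2' : ((0:ℝ), y1) ∈ U := connectedComponentIn_subset U (x1, 0) hmem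
        exact h2'
      linarith [hy1S.2]
  have huy1 : uu k x ε ((0:ℝ), y1) = 0 := by
    refine le_antisymm hy1S.2 ?_
    have hmemcl : y1 ∈ closure (Set.Ico (0:ℝ) y1) := by
      rw [closure_Ico hy1_0.ne]
      exact ⟨hy1_0.le, le_refl _⟩
    have hsub : Set.Ico (0:ℝ) y1 ⊆ {t : ℝ | 0 ≤ uu k x ε ((0:ℝ), t)} :=
      fun t ht => (hbelow t ht.1 ht.2).le
    have hclsd : IsClosed {t : ℝ | 0 ≤ uu k x ε ((0:ℝ), t)} :=
      isClosed_le continuous_const hvertcont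
    exact (closure_minimal hsub hclsd) hmemcl
  -- lower frontier point
  set T : Set ℝ := {t : ℝ | t ∈ Set.Icc (-2:ℝ) 0 ∧ uu k x ε ((0:ℝ), t) ≤ 0} with hTdef
  have hTcl : IsClosed T := by
    have hEq : T = Set.Icc (-2:ℝ) 0 ∩ (fun t => uu k x ε ((0:ℝ), t)) ⁻¹' Set.Iic 0 :=
      Set.ext fun t => Iff.rfl
    rw [hEq]
    exact isClosed_Icc.inter (IsClosed.preimage hvertcont isClosed_Iic)
  have h2T : (-2:ℝ) ∈ T := ⟨⟨le_refl _, by norm_num⟩, h0m2.le⟩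
  have hbddT : BddAbove T := ⟨0, fun t ht => ht.1.2⟩
  set y2 := sSup T with hy2def
  have hy2T : y2 ∈ T := hTcl.csSup_mem ⟨-2, h2T⟩ hbddT
  have hy2_0 : y2 < 0 := by
    rcases eq_or_lt_of_le hy2T.1.2 with hcase|hcase
    · exfalso
      have h2' := hy2T.2
      rw [hcase] at h2'
      linarith
    · exact hcase
  have habove : ∀ t : ℝ, t ≤ 0 → y2 < t → 0 < uu k x ε ((0:ℝ), t) := by
    intro t ht hlt
    by_contra hcon
    push_neg at hcon
    have htT : t ∈ T := ⟨⟨le_trans hy2T.1.1 hlt.le, ht⟩, hcon⟩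
    exact absurd (le_csSup hbddT htT) (not_le.mpr hlt)
  have hseg2 : ({(0:ℝ)} : Set ℝ) ×ˢ Set.Ioc y2 (0:ℝ) ⊆ Omeg k hk x ε := by
    rw [hOm]
    refine subset_compIn (((convex_singleton _).prod (convex_Ioc _ _)).isPreconnected)
      ?_ (c := ((0:ℝ),(0:ℝ))) ⟨rfl, hy2_0, le_refl 0⟩ (hOm ▸ h00Ω) hx1U
    rintro ⟨a, b⟩ ⟨ha, hb⟩
    have ha' : a = 0 := ha
    subst ha'
    exact habove b hb.2 hb.1
  have hfr2 : ((0:ℝ), y2) ∈ frontier (Omeg k hk x ε) := by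
    rw [hΩo.frontier_eq]
    constructor
    · refine closure_mono hseg2 ?_
      rw [closure_prod_eq]
      exact ⟨subset_closure rfl, by rw [closure_Ioc hy2_0.ne]; exact ⟨le_refl _, hy2_0.le⟩⟩
    · intro hmem
      have h1 : 0 < uu k x ε ((0:ℝ), y2) := by
        rw [hOm] at hmem
        have h2' : ((0:ℝ), y2) ∈ U := connectedComponentIn_subset U (x1, 0) hmem
        exact h2'
      linarith [hy2T.2]
  have huy2 : uu k x ε ((0:ℝ), y2) = 0 := by
    refine le_antisymm hy2T.2 ?_
    have hmemcl : y2 ∈ closure (Set.Ioc y2 (0:ℝ)) := by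
      rw [closure_Ioc hy2_0.ne]
      exact ⟨le_refl _, hy2_0.le⟩
    have hsub : Set.Ioc y2 (0:ℝ) ⊆ {t : ℝ | 0 ≤ uu k x ε ((0:ℝ), t)} :=
      fun t ht => (habove t ht.2 ht.1).le
    have hclsd : IsClosed {t : ℝ | 0 ≤ uu k x ε ((0:ℝ), t)} :=
      isClosed_le continuous_const hvertcont
    exact (closure_minimal hsub hclsd) hmemcl
  -- NN signs
  have habs1 : |y1| ≤ 2 := abs_le.mpr ⟨by linarith [hy1S.1.1], hy1S.1.2⟩
  have habs2 : |y2| ≤ 2 := abs_le.mpr ⟨hy2T.1.1, by linarith [hy2T.1.2]⟩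
  obtain ⟨hb10, hb11, hb12⟩ := hbnd _ (hznorm y1 habs1)
  obtain ⟨hb20, hb21, hb22⟩ := hbnd _ (hznorm y2 habs2)
  have hNNneg : NN (uu k x ε) ((0:ℝ), y1) < 0 :=
    NN_neg_at k x ε C y1 hC1 hε hε2000 heC hb10 hb11 hb12 hy1S.1.1 hy1S.1.2 huy1
  have hNNpos : 0 < NN (uu k x ε) ((0:ℝ), y2) :=
    NN_pos_at k x ε C y2 hC1 hε hε2000 heC hb20 hb21 hb22 hy2T.1.1 hy2T.1.2 huy2
  exact ⟨((0:ℝ), y2), hfr2, ((0:ℝ), y1), hfr1, hNNpos, hNNneg⟩
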